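/- Let M_u ∈ ℝ^{n_u×n_u}, M_z ∈ ℝ^{n_z×n_z}, W_u ∈ ℝ^{n_u×n_u}, W_z ∈ ℝ^{n_z×n_z} be symmetric positive definite and z̃, z_1, …, z_N ∈ ℝ^{n_z}. Define A_ℓ = (I_{n_u}, I_{n_u} ⊗ z_ℓᵀM_z) ∈ ℝ^{n_u×n_θ} with n_θ = n_u(n_z+1), and let W_θ = [[W_u, W_u ⊗ z̃ᵀM_z], [W_u ⊗ M_z z̃, W_u ⊗ (W_z + M_z z̃ z̃ᵀ M_z)]]. Then W_θ is invertible and, for all 1 ≤ ℓ, m ≤ N, A_ℓ W_θ^{-1} A_mᵀ = (1 + (z_ℓ − z̃)ᵀ M_z W_z^{-1} M_z (z_m − z̃)) · W_u^{-1}. Consequently, for the stacked matrix A = (A_1; …; A_N) ∈ ℝ^{n_u N×n_θ}, one has A W_θ^{-1} Aᵀ = G ⊗ W_u^{-1}, where G = e eᵀ + (Z − z̃eᵀ)ᵀ M_z W_z^{-1} M_z (Z − z̃eᵀ) ∈ ℝ^{N×N}, Z = (z_1 ⋯ z_N) ∈ ℝ^{n_z×N}, and e ∈ ℝ^N is the vector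 of ones. -/

import Mathlib

open Matrix
open scoped Kronecker

/-- `Wu ⊗ vᵀ` : the Kronecker product of `Wu` with a row vector `vᵀ`
(the trivial row index is suppressed). -/
def kronRow {nu nz : ℕ} (Wu : Matrix (Fin nu) (Fin nu) ℝ) (v : Fin nz → ℝ) :
    Matrix (Fin nu) (Fin nu × Fin nz) ℝ :=
  Matrix.of fun i p => Wu i p.1 * v p.2

/-- `Wu ⊗ v` : the Kronecker product of `Wu` with a column vector `v`
(the trivial column index is suppressed). -/
def kronCol {nu nz : ℕ} (Wu : Matrix (Fin nu) (Fin nu) ℝ) (v : Fin nz → ℝ) :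
    Matrix (Fin nu × Fin nz) (Fin nu) ℝ :=
  Matrix.of fun p i => Wu p.1 i * v p.2

/-- The prior precision matrix
`Wθ = [[Wu, Wu ⊗ z̃ᵀMz], [Wu ⊗ Mz z̃, Wu ⊗ (Wz + Mz z̃ z̃ᵀ Mz)]]`,
acting on `ℝ^{nu} ⊕ ℝ^{nu × nz} ≅ ℝ^{nu(nz+1)}`. -/
noncomputable def Wtheta {nu nz : ℕ} (Wu : Matrix (Fin nu) (Fin nu) ℝ)
    (Wz Mz : Matrix (Fin nz) (Fin nz) ℝ) (zt : Fin nz → ℝ) :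
    Matrix (Fin nu ⊕ Fin nu × Fin nz) (Fin nu ⊕ Fin nu × Fin nz) ℝ :=
  Matrix.fromBlocks Wu (kronRow Wu (zt ᵥ* Mz)) (kronCol Wu (Mz *ᵥ zt))
    (Wu ⊗ₖ (Wz + Matrix.vecMulVec (Mz *ᵥ zt) (zt ᵥ* Mz)))

/-- The discrepancy forward operator `A(z) = (I_{nu}, I_{nu} ⊗ zᵀMz)`. -/
noncomputable def Aop {nu nz : ℕ} (Mz : Matrix (Fin nz) (Fin nz) ℝ) (z : Fin nz → ℝ) :
    Matrix (Fin nu) (Fin nu ⊕ Fin nu × Fin nz) ℝ :=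
  Matrix.of fun i q =>
    Sum.elim (fun i' => (1 : Matrix (Fin nu) (Fin nu) ℝ) i i')
      (fun p => (1 : Matrix (Fin nu) (Fin nu) ℝ) i p.1 * (z ᵥ* Mz) p.2) q

/-- The vertical stacking `A = (A_1; …; A_N)` of the forward operators `A_ℓ = A(z_ℓ)`. -/
noncomputable def Astack {nu nz N : ℕ} (Mz : Matrix (Fin nz) (Fin nz) ℝ)
    (z : Fin N → Fin nz → ℝ) :
    Matrix (Fin N × Fin nu) (Fin nu ⊕ Fin nu × Fin nz) ℝ :=
  Matrix.of fun p q => Aop Mz (z p.1) p.2 q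

/-- The data matrix `Z = (z_1 ⋯ z_N)` whose columns are the design points. -/
def Zmat {nz N : ℕ} (z : Fin N → Fin nz → ℝ) : Matrix (Fin nz) (Fin N) ℝ :=
  Matrix.of fun i ℓ => z ℓ i

/-- The Gram matrix `G = e eᵀ + (Z − z̃eᵀ)ᵀ Mz Wz⁻¹ Mz (Z − z̃eᵀ)`. -/
noncomputable def Gmat {nz N : ℕ} (Mz Wz : Matrix (Fin nz) (Fin nz) ℝ)
    (zt : Fin nz → ℝ) (z : Fin N → Fin nz → ℝ) : Matrix (Fin N) (Fin N) ℝ :=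
  Matrix.vecMulVec (fun _ => 1) (fun _ => 1) +
    (Zmat z - Matrix.of fun i (_ : Fin N) => zt i)ᵀ * (Mz * Wz⁻¹ * Mz) *
      (Zmat z - Matrix.of fun i (_ : Fin N) => zt i)


section lems
variable {nu nz : ℕ}

lemma kronRow_transpose (P : Matrix (Fin nu) (Fin nu) ℝ) (v : Fin nz → ℝ) :
    (kronRow P v)ᵀ = kronCol Pᵀ v := by
  ext p i; simp [kronRow, kronCol]

lemma mul_kronRow (M P : Matrix (Fin nu) (Fin nu) ℝ) (v : Fin nz → ℝ) :
    M * kronRow P v = kronRow (M * P) v := by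
  ext i p
  simp only [mul_apply, kronRow, of_apply, Finset.sum_mul]
  exact Finset.sum_congr rfl fun _ _ => by ring

lemma kronCol_mul (P M : Matrix (Fin nu) (Fin nu) ℝ) (v : Fin nz → ℝ) :
    kronCol P v * M = kronCol (P * M) v := by
  ext p j
  simp only [mul_apply, kronCol, of_apply, Finset.sum_mul]
  exact Finset.sum_congr rfl fun _ _ => by ring

lemma kronRow_mul_kron (P Q : Matrix (Fin nu) (Fin nu) ℝ) (v : Fin nz → ℝ)
    (R : Matrix (Fin nz) (Fin nz) ℝ) :
    kronRow P v * (Q ⊗ₖ R) = kronRow (P * Q) (v ᵥ* R) := by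
  ext i p
  simp only [mul_apply, kronRow, of_apply, kroneckerMap_apply, vecMul, dotProduct,
    Fintype.sum_prod_type, Finset.sum_mul, Finset.mul_sum]
  rw [Finset.sum_comm]
  exact Finset.sum_congr rfl fun _ _ => Finset.sum_congr rfl fun _ _ => by ring

lemma kron_mul_kronCol (Q P : Matrix (Fin nu) (Fin nu) ℝ) (w : Fin nz → ℝ)
    (R : Matrix (Fin nz) (Fin nz) ℝ) :
    (Q ⊗ₖ R) * kronCol P w = kronCol (Q * P) (R *ᵥ w) := by
  ext p j
  simp only [mul_apply, kronCol, of_apply, kroneckerMap_apply, mulVec, dotProduct,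
    Fintype.sum_prod_type, Finset.sum_mul, Finset.mul_sum]
  rw [Finset.sum_comm]
  exact Finset.sum_congr rfl fun _ _ => Finset.sum_congr rfl fun _ _ => by ring

lemma kronRow_mul_kronCol (P Q : Matrix (Fin nu) (Fin nu) ℝ) (v w : Fin nz → ℝ) :
    kronRow P v * kronCol Q w = (v ⬝ᵥ w) • (P * Q) := by
  ext i j
  simp only [mul_apply, kronRow, kronCol, of_apply, Matrix.smul_apply, dotProduct,
    Fintype.sum_prod_type, Finset.sum_mul, Finset.mul_sum, smul_eq_mul]
  exact Finset.sum_congr rfl fun _ _ => Finset.sum_congr rfl fun _ _ => by ring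

lemma kronCol_mul_kronRow (P Q : Matrix (Fin nu) (Fin nu) ℝ) (v w : Fin nz → ℝ) :
    kronCol P v * kronRow Q w = (P * Q) ⊗ₖ vecMulVec v w := by
  ext p q
  simp only [mul_apply, kronRow, kronCol, of_apply, kroneckerMap_apply, vecMulVec_apply,
    Finset.sum_mul]
  exact Finset.sum_congr rfl fun _ _ => by ring

lemma kronCol_smul (P : Matrix (Fin nu) (Fin nu) ℝ) (a : ℝ) (v : Fin nz → ℝ) :
    kronCol P (a • v) = a • kronCol P v := by
  ext p j; simp [kronCol, mul_comm, mul_left_comm]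

lemma kronCol_add (P : Matrix (Fin nu) (Fin nu) ℝ) (v w : Fin nz → ℝ) :
    kronCol P (v + w) = kronCol P v + kronCol P w := by
  ext p j; simp [kronCol, mul_add]

lemma vecMulVec_mulVec' (v w x : Fin nz → ℝ) :
    vecMulVec v w *ᵥ x = (w ⬝ᵥ x) • v := by
  ext i
  simp [vecMulVec_apply, mulVec, dotProduct, Finset.mul_sum, Finset.sum_mul, mul_assoc]
  exact Finset.sum_congr rfl fun _ _ => by ring

lemma vecMulVec_mul' (v w : Fin nz → ℝ) (M : Matrix (Fin nz) (Fin nz) ℝ) :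
    vecMulVec v w * M = vecMulVec v (w ᵥ* M) := by
  ext i j
  simp only [mul_apply, vecMulVec_apply, vecMul, dotProduct, Finset.mul_sum]
  exact Finset.sum_congr rfl fun _ _ => by ring

noncomputable def Winv {nu nz : ℕ} (Wu : Matrix (Fin nu) (Fin nu) ℝ)
    (Wz Mz : Matrix (Fin nz) (Fin nz) ℝ) (zt : Fin nz → ℝ) :
    Matrix (Fin nu ⊕ Fin nu × Fin nz) (Fin nu ⊕ Fin nu × Fin nz) ℝ :=
  Matrix.fromBlocks ((1 + (zt ᵥ* Mz) ⬝ᵥ (Wz⁻¹ *ᵥ (Mz *ᵥ zt))) • Wu⁻¹)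
    (-(kronRow Wu⁻¹ ((zt ᵥ* Mz) ᵥ* Wz⁻¹)))
    (-(kronCol Wu⁻¹ (Wz⁻¹ *ᵥ (Mz *ᵥ zt))))
    (Wu⁻¹ ⊗ₖ Wz⁻¹)

lemma wtheta_mul_winv (Wu : Matrix (Fin nu) (Fin nu) ℝ)
    (Wz Mz : Matrix (Fin nz) (Fin nz) ℝ) (zt : Fin nz → ℝ)
    (hWu : Wu * Wu⁻¹ = 1) (hWz : Wz * Wz⁻¹ = 1) :
    Wtheta Wu Wz Mz zt * Winv Wu Wz Mz zt = 1 := by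
  set s : Fin nz → ℝ := Wz⁻¹ *ᵥ (Mz *ᵥ zt) with hs
  set c : ℝ := (zt ᵥ* Mz) ⬝ᵥ s with hc
  have h11 : Wu * ((1 + c) • Wu⁻¹) + kronRow Wu (zt ᵥ* Mz) * -(kronCol Wu⁻¹ s) = 1 := by
    rw [Matrix.mul_neg, kronRow_mul_kronCol, Matrix.mul_smul, hWu, ← hc, add_smul, one_smul]
    abel
  have h12 : Wu * -(kronRow Wu⁻¹ ((zt ᵥ* Mz) ᵥ* Wz⁻¹)) +
      kronRow Wu (zt ᵥ* Mz) * (Wu⁻¹ ⊗ₖ Wz⁻¹) = 0 := by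
    rw [Matrix.mul_neg, mul_kronRow, hWu, kronRow_mul_kron, hWu]
    exact neg_add_cancel _
  have h21 : kronCol Wu (Mz *ᵥ zt) * ((1 + c) • Wu⁻¹) +
      (Wu ⊗ₖ (Wz + vecMulVec (Mz *ᵥ zt) (zt ᵥ* Mz))) * -(kronCol Wu⁻¹ s) = 0 := by
    rw [Matrix.mul_neg, Matrix.mul_smul, kronCol_mul, hWu, kron_mul_kronCol, hWu]
    have hXs : (Wz + vecMulVec (Mz *ᵥ zt) (zt ᵥ* Mz)) *ᵥ s
        = Mz *ᵥ zt + c • (Mz *ᵥ zt) := by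
      rw [add_mulVec, vecMulVec_mulVec', hs, mulVec_mulVec, hWz, one_mulVec, ← hs, ← hc]
    rw [hXs, kronCol_add, kronCol_smul, add_smul, one_smul]
    abel
  have h22 : kronCol Wu (Mz *ᵥ zt) * -(kronRow Wu⁻¹ ((zt ᵥ* Mz) ᵥ* Wz⁻¹)) +
      (Wu ⊗ₖ (Wz + vecMulVec (Mz *ᵥ zt) (zt ᵥ* Mz))) * (Wu⁻¹ ⊗ₖ Wz⁻¹) = 1 := by
    rw [Matrix.mul_neg, kronCol_mul_kronRow, hWu, ← Matrix.mul_kronecker_mul, hWu, add_mul,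
      hWz, vecMulVec_mul', Matrix.kronecker_add, Matrix.one_kronecker_one]
    abel
  rw [Wtheta, Winv, Matrix.fromBlocks_multiply, h11, h12, h21, h22, Matrix.fromBlocks_one]

end lems

section lems2
variable {nu nz : ℕ}

lemma aop_eq (Mz : Matrix (Fin nz) (Fin nz) ℝ) (z : Fin nz → ℝ) :
    (Aop Mz z : Matrix (Fin nu) _ ℝ) = fromCols 1 (kronRow 1 (z ᵥ* Mz)) := rfl

lemma aop_winv_aop (Wu : Matrix (Fin nu) (Fin nu) ℝ)
    (Wz Mz : Matrix (Fin nz) (Fin nz) ℝ) (zt : Fin nz → ℝ) (a b : Fin nz → ℝ) :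
    Aop (nu := nu) Mz a * Winv Wu Wz Mz zt * (Aop (nu := nu) Mz b)ᵀ =
      (1 + (zt ᵥ* Mz) ⬝ᵥ (Wz⁻¹ *ᵥ (Mz *ᵥ zt))
        - (a ᵥ* Mz) ⬝ᵥ (Wz⁻¹ *ᵥ (Mz *ᵥ zt))
        - ((zt ᵥ* Mz) ᵥ* Wz⁻¹) ⬝ᵥ (b ᵥ* Mz)
        + ((a ᵥ* Mz) ᵥ* Wz⁻¹) ⬝ᵥ (b ᵥ* Mz)) • Wu⁻¹ := by
  rw [aop_eq, aop_eq, transpose_fromCols, transpose_one, kronRow_transpose, transpose_one,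
    Winv, fromCols_mul_fromBlocks, fromCols_mul_fromRows]
  simp only [Matrix.one_mul, Matrix.mul_one, Matrix.mul_neg, Matrix.neg_mul, Matrix.add_mul,
    kronRow_mul_kron, kronRow_mul_kronCol]
  module

lemma scalar_eq (Wz Mz : Matrix (Fin nz) (Fin nz) ℝ)
    (hMzT : Mzᵀ = Mz) (hWzT : (Wz⁻¹)ᵀ = Wz⁻¹) (zt a b : Fin nz → ℝ) :
    1 + (zt ᵥ* Mz) ⬝ᵥ (Wz⁻¹ *ᵥ (Mz *ᵥ zt))
      - (a ᵥ* Mz) ⬝ᵥ (Wz⁻¹ *ᵥ (Mz *ᵥ zt))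
      - ((zt ᵥ* Mz) ᵥ* Wz⁻¹) ⬝ᵥ (b ᵥ* Mz)
      + ((a ᵥ* Mz) ᵥ* Wz⁻¹) ⬝ᵥ (b ᵥ* Mz)
    = 1 + (a - zt) ⬝ᵥ (Mz *ᵥ (Wz⁻¹ *ᵥ (Mz *ᵥ (b - zt)))) := by
  have hv : ∀ x : Fin nz → ℝ, x ᵥ* Mz = Mz *ᵥ x := fun x => by
    rw [← vecMul_transpose, hMzT]
  have hw : ∀ x : Fin nz → ℝ, x ᵥ* Wz⁻¹ = Wz⁻¹ *ᵥ x := fun x => by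
    rw [← vecMul_transpose, hWzT]
  set B : (Fin nz → ℝ) → (Fin nz → ℝ) → ℝ :=
    fun x y => (Mz *ᵥ x) ⬝ᵥ (Wz⁻¹ *ᵥ (Mz *ᵥ y)) with hB
  have hBsymm : ∀ x y, B x y = B y x := by
    intro x y
    rw [hB]
    simp only
    rw [dotProduct_mulVec, hw, dotProduct_comm]
  have t1 : (zt ᵥ* Mz) ⬝ᵥ (Wz⁻¹ *ᵥ (Mz *ᵥ zt)) = B zt zt := by rw [hv]
  have t2 : (a ᵥ* Mz) ⬝ᵥ (Wz⁻¹ *ᵥ (Mz *ᵥ zt)) = B a zt := by rw [hv]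
  have t3 : ((zt ᵥ* Mz) ᵥ* Wz⁻¹) ⬝ᵥ (b ᵥ* Mz) = B b zt := by
    rw [hv, hv, hw, dotProduct_comm]
  have t4 : ((a ᵥ* Mz) ᵥ* Wz⁻¹) ⬝ᵥ (b ᵥ* Mz) = B b a := by
    rw [hv, hv, hw, dotProduct_comm]
  have hR : (a - zt) ⬝ᵥ (Mz *ᵥ (Wz⁻¹ *ᵥ (Mz *ᵥ (b - zt))))
      = B a b - B a zt - B zt b + B zt zt := by
    rw [dotProduct_mulVec, hv, hB]
    simp only
    rw [mulVec_sub Mz b zt, mulVec_sub Wz⁻¹, mulVec_sub Mz a zt, sub_dotProduct,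
      dotProduct_sub, dotProduct_sub]
    ring
  rw [t1, t2, t3, t4, hR, hBsymm zt b, hBsymm b a]
  ring

end lems2

lemma gram_apply {nz N : ℕ} (A : Matrix (Fin nz) (Fin N) ℝ)
    (K : Matrix (Fin nz) (Fin nz) ℝ) (ℓ m : Fin N) :
    (Aᵀ * K * A) ℓ m = (fun i => A i ℓ) ⬝ᵥ (K *ᵥ fun i => A i m) := by
  simp only [mul_apply, transpose_apply, dotProduct, mulVec, Finset.mul_sum, Finset.sum_mul]
  rw [Finset.sum_comm]
  exact Finset.sum_congr rfl fun _ _ => Finset.sum_congr rfl fun _ _ => by ring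

/-- The prior precision `Wθ` is invertible,
`A_ℓ Wθ⁻¹ A_mᵀ = (1 + (z_ℓ − z̃)ᵀ Mz Wz⁻¹ Mz (z_m − z̃)) Wu⁻¹` for all `ℓ, m`, and the
stacked forward operator satisfies `A Wθ⁻¹ Aᵀ = G ⊗ Wu⁻¹`. -/
theorem stacked_forward_prior_product
    {nu nz N : ℕ}
    (Mu Wu : Matrix (Fin nu) (Fin nu) ℝ) (Mz Wz : Matrix (Fin nz) (Fin nz) ℝ)
    (hMu : Mu.PosDef) (hWu : Wu.PosDef) (hMz : Mz.PosDef) (hWz : Wz.PosDef)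
    (zt : Fin nz → ℝ) (z : Fin N → Fin nz → ℝ) :
    IsUnit (Wtheta Wu Wz Mz zt).det ∧
    (∀ ℓ m : Fin N,
      Aop (nu := nu) Mz (z ℓ) * (Wtheta Wu Wz Mz zt)⁻¹ * (Aop (nu := nu) Mz (z m))ᵀ
        = (1 + (z ℓ - zt) ⬝ᵥ (Mz *ᵥ (Wz⁻¹ *ᵥ (Mz *ᵥ (z m - zt))))) • Wu⁻¹) ∧
    Astack (nu := nu) Mz z * (Wtheta Wu Wz Mz zt)⁻¹ * (Astack (nu := nu) Mz z)ᵀ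
      = Gmat Mz Wz zt z ⊗ₖ Wu⁻¹ := by
  have hWuu : Wu * Wu⁻¹ = 1 :=
    Matrix.mul_nonsing_inv _ (isUnit_iff_ne_zero.2 hWu.det_pos.ne')
  have hWzz : Wz * Wz⁻¹ = 1 :=
    Matrix.mul_nonsing_inv _ (isUnit_iff_ne_zero.2 hWz.det_pos.ne')
  have hmul := wtheta_mul_winv Wu Wz Mz zt hWuu hWzz
  have hdet : IsUnit (Wtheta Wu Wz Mz zt).det := by
    apply IsUnit.of_mul_eq_one (Winv Wu Wz Mz zt).det
    rw [← Matrix.det_mul, hmul, Matrix.det_one]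
  have hinv : (Wtheta Wu Wz Mz zt)⁻¹ = Winv Wu Wz Mz zt := Matrix.inv_eq_right_inv hmul
  have hMzT : Mzᵀ = Mz := by
    rw [← Matrix.conjTranspose_eq_transpose_of_trivial]; exact hMz.1
  have hWzT : (Wz⁻¹)ᵀ = Wz⁻¹ := by
    rw [Matrix.transpose_nonsing_inv, ← Matrix.conjTranspose_eq_transpose_of_trivial, hWz.1]
  have h2 : ∀ ℓ m : Fin N,
      Aop (nu := nu) Mz (z ℓ) * (Wtheta Wu Wz Mz zt)⁻¹ * (Aop (nu := nu) Mz (z m))ᵀ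
        = (1 + (z ℓ - zt) ⬝ᵥ (Mz *ᵥ (Wz⁻¹ *ᵥ (Mz *ᵥ (z m - zt))))) • Wu⁻¹ := by
    intro ℓ m
    rw [hinv, aop_winv_aop, scalar_eq Wz Mz hMzT hWzT]
  refine ⟨hdet, h2, ?_⟩
  ext ⟨ℓ, i⟩ ⟨m, j⟩
  have hAA : (Astack (nu := nu) Mz z * (Wtheta Wu Wz Mz zt)⁻¹ * (Astack (nu := nu) Mz z)ᵀ) (ℓ, i) (m, j)
      = (Aop (nu := nu) Mz (z ℓ) * (Wtheta Wu Wz Mz zt)⁻¹ * (Aop (nu := nu) Mz (z m))ᵀ) i j := rfl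
  rw [hAA, h2 ℓ m]
  have hG : Gmat Mz Wz zt z ℓ m
      = 1 + (z ℓ - zt) ⬝ᵥ (Mz *ᵥ (Wz⁻¹ *ᵥ (Mz *ᵥ (z m - zt)))) := by
    rw [Gmat, Matrix.add_apply, Matrix.vecMulVec_apply, one_mul, gram_apply]
    congr 1
    have hcol : ∀ (w : Fin N),
        (fun i => (Zmat z - Matrix.of fun i (_ : Fin N) => zt i) i w) = z w - zt := by
      intro w; funext i; simp [Zmat, Matrix.sub_apply]
    rw [hcol, hcol, Matrix.mulVec_mulVec, Matrix.mulVec_mulVec]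
  rw [Matrix.kroneckerMap_apply, hG, Matrix.smul_apply, smul_eq_mul]
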